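/- Let A and B be finite-dimensional semi-simple F-algebras, with B realized as a product of endomorphism algebras ∏_{j=1}^r End_{Δ_j}(V_j) where each Δ_j is a division F-algebra and V_j a finite right Δ_j-module, and A = ∏_{i=1}^s A_i a product of simple F-algebras. Then there exists an F-algebra homomorphism from A to B if and only if for each j there is a decomposition V_j = V_{j1} ⊕ ⋯ ⊕ V_{js} into Δ_j-subspaces such that each V_{ji} admits a right module structure over Δ_j ⊗_F A_i^op compatible with its Δ_j-structure. -/

import Mathlib

open scoped DirectSum
section Helpers

variable {F : Type*} [CommSemiring F] {D : Type*} [Ring D] [Algebra F D]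
variable {M : Type*} [AddCommGroup M] [Module D M] [Module F M]
  [SMulCommClass D F M] [IsScalarTower F D M]
variable {ι : Type*} [Fintype ι] [DecidableEq ι]

/-- Orthogonal idempotent endomorphisms summing to 1 give an internal direct sum. -/
theorem isInternal_range_of_orthogonal (e : ι → Module.End D M)
    (horth : ∀ i k, e i * e k = if i = k then e i else 0)
    (hsum : ∑ i, e i = 1) :
    DirectSum.IsInternal (fun i => LinearMap.range (e i)) := by
  set Wr : ι → Submodule D M := fun i => LinearMap.range (e i) with hWr
  let g : M →ₗ[D] ⨁ i, Wr i :=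
    ∑ i, (DirectSum.lof D ι (fun i => ↥(Wr i)) i).comp
      ((e i).codRestrict (Wr i) (fun x => LinearMap.mem_range_self _ x))
  have hR : ∀ v, DirectSum.coeLinearMap Wr (g v) = v := by
    intro v
    simp only [g, LinearMap.sum_apply, LinearMap.comp_apply, map_sum,
      DirectSum.lof_eq_of, DirectSum.coeLinearMap_of, LinearMap.codRestrict_apply]
    rw [← LinearMap.sum_apply, hsum, Module.End.one_apply]
  have hL : ∀ x : ⨁ i, Wr i, g (DirectSum.coeLinearMap Wr x) = x := by
    suffices hcomp : g.comp (DirectSum.coeLinearMap Wr) = LinearMap.id by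
      intro x; simpa using LinearMap.congr_fun hcomp x
    · 
      refine DirectSum.linearMap_ext _ fun i => ?_
      ext w
      obtain ⟨u, hu⟩ := w.2
      simp only [LinearMap.comp_apply, DirectSum.lof_eq_of, DirectSum.coeLinearMap_of,
        LinearMap.id_apply, g, LinearMap.sum_apply, LinearMap.codRestrict_apply]
      have hek : ∀ k, e k (↑w : M) = if k = i then (↑w : M) else 0 := by
        intro k
        rw [← hu, ← Module.End.mul_apply, horth k i]
        split_ifs with h
        · subst h; rfl
        · rfl
      rw [Finset.sum_eq_single i]
      · congr 1
        rw [show ((e i).codRestrict (Wr i) (fun x => LinearMap.mem_range_self _ x)) (↑w : M) = w from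
          Subtype.ext (by simp [hek i])]
      · intro k _ hk
        have : ((e k).codRestrict (Wr k) (fun x => LinearMap.mem_range_self _ x)) (↑w : M) = 0 :=
          Subtype.ext (by simp [hek k, hk])
        rw [this, map_zero]
      · intro h; exact absurd (Finset.mem_univ i) h
  exact Function.bijective_iff_has_inverse.mpr
    ⟨g, fun x => hL x, fun v => hR v⟩

/-- From an internal direct sum decomposition, an algebra map from the product of
endomorphism algebras of the pieces into the endomorphism algebra of the whole. -/
theorem exists_piEnd_algHom (W : ι → Submodule D M) (h : DirectSum.IsInternal W) :
    Nonempty ((∀ i, Module.End D (W i)) →ₐ[F] Module.End D M) := by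
  classical
  let E := LinearEquiv.ofBijective (DirectSum.coeLinearMap W) h
  let p : ∀ i, M →ₗ[D] W i := fun i =>
    (DirectSum.component D ι (fun i => ↥(W i)) i).comp E.symm.toLinearMap
  have hp_same : ∀ i (w : W i), p i (↑w : M) = w := fun i w =>
    h.ofBijective_coeLinearMap_same w
  have hp_ne : ∀ {i k}, k ≠ i → ∀ (w : W k), p i (↑w : M) = 0 := fun {i k} hki w =>
    h.ofBijective_coeLinearMap_of_ne hki w
  have hsum_id : ∑ i, (W i).subtype ∘ₗ p i = LinearMap.id := by
    ext v
    have hx : ∀ x : ⨁ i, W i, DirectSum.coeLinearMap W x = ∑ i, ((x i : M)) := by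
      intro x
      conv_lhs => rw [← DirectSum.sum_univ_of x]
      rw [map_sum]
      exact Finset.sum_congr rfl fun i _ => DirectSum.coeLinearMap_of _ _ _
    have : ∑ i, ((E.symm v i : M)) = v := by
      rw [← hx (E.symm v)]
      exact E.apply_symm_apply v
    simpa [p, ← DirectSum.apply_eq_component] using this
  refine ⟨{ toFun := fun f => ∑ i, (W i).subtype ∘ₗ (f i) ∘ₗ p i
            map_one' := ?_
            map_mul' := ?_
            map_zero' := ?_
            map_add' := ?_
            commutes' := ?_ }⟩
  · simpa [Module.End.one_eq_id] using hsum_id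
  · intro f g
    rw [Finset.sum_mul_sum]
    refine Finset.sum_congr rfl fun i _ => ?_
    rw [Finset.sum_eq_single i]
    · ext v
      simp [Module.End.mul_apply, hp_same]
    · intro k _ hk
      ext v
      simp [Module.End.mul_apply, hp_ne hk]
    · intro h'; exact absurd (Finset.mem_univ i) h'
  · simp
  · intro f g
    rw [← Finset.sum_add_distrib]
    refine Finset.sum_congr rfl fun i _ => ?_
    ext v
    simp
  · intro c
    show (∑ i, (W i).subtype ∘ₗ ((algebraMap F (∀ i, Module.End D (W i)) c) i) ∘ₗ p i)
        = algebraMap F (Module.End D M) c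
    have : ∀ i, (W i).subtype ∘ₗ ((algebraMap F (∀ i, Module.End D (W i)) c) i) ∘ₗ p i
        = c • ((W i).subtype ∘ₗ p i) := by
      intro i
      ext v
      simp [Module.algebraMap_end_eq_smul_id]
    rw [show (∑ i, (W i).subtype ∘ₗ ((algebraMap F (∀ i, Module.End D (W i)) c) i) ∘ₗ p i)
        = ∑ i, c • ((W i).subtype ∘ₗ p i) from Finset.sum_congr rfl fun i _ => this i,
      ← Finset.smul_sum, hsum_id]
    rfl

end Helpers


/-- **Existence of homomorphisms between semi-simple algebras via module decompositions.**
Let `B = ∏_{j=1}^r End_{Δ_j}(V_j)` (each `Δ_j` a finite-dimensional division `F`-algebra,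
`V_j` a finite `Δ_j`-module) and `A = ∏_{i=1}^s A_i` a product of finite-dimensional simple
`F`-algebras.  There is an `F`-algebra homomorphism `A → B` iff for each `j` the module `V_j`
decomposes as an internal direct sum `V_j = V_{j1} ⊕ ⋯ ⊕ V_{js}` of `Δ_j`-submodules such
that each `V_{ji}` carries a `Δ_j ⊗_F A_i^op`-module structure compatible with its
`Δ_j`-structure, i.e. an `A_i`-action by `Δ_j`-linear endomorphisms. -/
theorem homExists_iff_decomposition
    (F : Type*) [Field F] (r s : ℕ)
    (Δ : Fin r → Type*) [∀ j, DivisionRing (Δ j)] [∀ j, Algebra F (Δ j)]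
    [∀ j, FiniteDimensional F (Δ j)]
    (V : Fin r → Type*) [∀ j, AddCommGroup (V j)] [∀ j, Module (Δ j) (V j)]
    [∀ j, Module F (V j)] [∀ j, SMulCommClass (Δ j) F (V j)]
    [∀ j, IsScalarTower F (Δ j) (V j)] [∀ j, FiniteDimensional F (V j)]
    (A : Fin s → Type*) [∀ i, Ring (A i)] [∀ i, Algebra F (A i)]
    [∀ i, FiniteDimensional F (A i)] [∀ i, IsSimpleRing (A i)] :
    Nonempty (((i : Fin s) → A i) →ₐ[F] ((j : Fin r) → Module.End (Δ j) (V j))) ↔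
      ∀ j : Fin r, ∃ W : Fin s → Submodule (Δ j) (V j),
        DirectSum.IsInternal W ∧
        ∀ i : Fin s, Nonempty (A i →ₐ[F] Module.End (Δ j) (W i)) := by
  classical
  constructor
  · rintro ⟨φ⟩ j
    let φj : ((i : Fin s) → A i) →ₐ[F] Module.End (Δ j) (V j) :=
      (Pi.evalAlgHom F _ j).comp φ
    let e : Fin s → Module.End (Δ j) (V j) := fun i => φj (Pi.single i 1)
    have hsingle_mul : ∀ i k : Fin s,
        (Pi.single i (1 : A i) : ∀ l, A l) * Pi.single k 1
          = if i = k then Pi.single i 1 else 0 := by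
      intro i k
      split_ifs with h
      · subst h
        funext l
        rcases eq_or_ne l i with rfl | hl
        · simp [Pi.mul_apply]
        · simp [Pi.mul_apply, Pi.single_eq_of_ne hl]
      · funext l
        rcases eq_or_ne l i with rfl | hl
        · simp [Pi.mul_apply, Pi.single_eq_of_ne h]
        · simp [Pi.mul_apply, Pi.single_eq_of_ne hl]
    have hmul_single : ∀ (i : Fin s) (a b : A i),
        (Pi.single i a : ∀ l, A l) * Pi.single i b = Pi.single i (a * b) := by
      intro i a b
      funext l
      rcases eq_or_ne l i with rfl | hl
      · simp [Pi.mul_apply]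
      · simp [Pi.mul_apply, Pi.single_eq_of_ne hl]
    have horth : ∀ i k, e i * e k = if i = k then e i else 0 := by
      intro i k
      show φj _ * φj _ = _
      rw [← map_mul, hsingle_mul]
      split_ifs with h
      · rfl
      · exact map_zero φj
    have hsum : ∑ i, e i = 1 := by
      show ∑ i, φj (Pi.single i 1) = 1
      rw [← map_sum]
      have : (∑ i, Pi.single i (1 : A i)) = (1 : ∀ i, A i) :=
        Finset.univ_sum_single (1 : ∀ i, A i)
      rw [this, map_one]
    refine ⟨fun i => LinearMap.range (e i),
      isInternal_range_of_orthogonal e horth hsum, fun i => ?_⟩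
    have hidem : e i * e i = e i := by simpa using horth i i
    have hfix : ∀ x : LinearMap.range (e i), e i (x : V j) = x := by
      rintro ⟨x, u, rfl⟩
      show e i ((e i) u) = (e i) u
      rw [← Module.End.mul_apply, hidem]
    have hmaps : ∀ (a : A i), ∀ x ∈ LinearMap.range (e i),
        φj (Pi.single i a) x ∈ LinearMap.range (e i) := by
      intro a x _
      refine ⟨φj (Pi.single i a) x, ?_⟩
      show (e i) (φj (Pi.single i a) x) = φj (Pi.single i a) x
      rw [← Module.End.mul_apply]
      rw [show e i = φj (Pi.single i 1) from rfl, ← map_mul, hmul_single, one_mul]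
    refine ⟨{ toFun := fun a => (φj (Pi.single i a)).restrict (hmaps a)
              map_one' := ?_
              map_mul' := ?_
              map_zero' := ?_
              map_add' := ?_
              commutes' := ?_ }⟩
    · refine LinearMap.ext fun x => Subtype.ext ?_
      simpa [LinearMap.restrict_apply] using hfix x
    · intro a b
      refine LinearMap.ext fun x => Subtype.ext ?_
      simp only [LinearMap.restrict_apply, Module.End.mul_apply, ← hmul_single, map_mul]
    · refine LinearMap.ext fun x => Subtype.ext ?_
      simp [LinearMap.restrict_apply]
    · intro a b
      refine LinearMap.ext fun x => Subtype.ext ?_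
      simp [LinearMap.restrict_apply, Pi.single_add]
    · intro c
      refine LinearMap.ext fun x => Subtype.ext ?_
      have h1 : (Pi.single i (algebraMap F (A i) c) : ∀ l, A l)
          = c • Pi.single i (1 : A i) := by
        rw [Algebra.algebraMap_eq_smul_one, Pi.single_smul]
      simp only [LinearMap.restrict_apply, h1, map_smul, LinearMap.smul_apply,
        Module.algebraMap_end_eq_smul_id]
      rw [show φj (Pi.single i 1) = e i from rfl]
      simp [hfix x]
  · intro hdec
    choose W hint hψ using hdec
    exact ⟨Pi.algHom F _ fun j =>
      ((exists_piEnd_algHom (F := F) (W j) (hint j)).some).comp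
        (Pi.algHom F _ fun i => ((hψ j i).some).comp (Pi.evalAlgHom F A i))⟩
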